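/- Let G = (V, E) be a finite simple graph, d a positive integer, and let ψ : V → ℝ^d be a random map such that the d·|V| coordinates {ψ(v)_i : v ∈ V, 1 ≤ i ≤ d} are independent and each is uniformly distributed on {−1/√d, +1/√d}. Fix nodes u, v ∈ V and assume every node in N(u) ∪ N(v) has degree at least 2 (so that log of its degree is positive). Define the random vectors u⃗ = Σ_{x ∈ N(u)} ψ(x)·√(1/log|N(x)|) and v⃗ = Σ_{y ∈ N(v)} ψ(y)·√(1/log|N(y)|). Then E[u⃗ · v⃗] = Σ_{x ∈ N(u) ∩ N(v)} 1/log|N(x)|, i.e., the expected dot product equals the Adamic–Adar index of the pair (u, v). -/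

import Mathlib

open MeasureTheory ProbabilityTheory
open scoped ENNReal

/-- For a finite simple graph, if every neighbor of `u` or `v` has degree at
least 2, the expected dot product of the Adamic–Adar weighted DotHash sketches of `u` and `v`
equals the Adamic–Adar index `∑_{x ∈ N(u) ∩ N(v)} 1 / log |N(x)|`. -/
theorem dothash_expected_dot_eq_adamic_adar
    {Ω : Type*} [MeasurableSpace Ω] (μ : Measure Ω) [IsProbabilityMeasure μ]
    {V : Type*} [Fintype V] [DecidableEq V]
    (G : SimpleGraph V) [DecidableRel G.Adj]
    (d : ℕ) (hd : 0 < d)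
    (ψ : Ω → V → Fin d → ℝ)
    (hmeas : ∀ (s : V) (i : Fin d), Measurable fun ω => ψ ω s i)
    (hindep : iIndepFun
      (fun (p : V × Fin d) ω => ψ ω p.1 p.2) μ)
    (hunif : ∀ (s : V) (i : Fin d),
      μ {ω | ψ ω s i = 1 / Real.sqrt d} = 1/2 ∧
      μ {ω | ψ ω s i = -(1 / Real.sqrt d)} = 1/2)
    (u v : V)
    (hdeg : ∀ x ∈ G.neighborFinset u ∪ G.neighborFinset v, 2 ≤ G.degree x) :
    ∫ ω, ∑ i,
        (∑ x ∈ G.neighborFinset u, ψ ω x i * Real.sqrt (1 / Real.log (G.degree x)))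
        * (∑ y ∈ G.neighborFinset v, ψ ω y i * Real.sqrt (1 / Real.log (G.degree y))) ∂μ
      = ∑ x ∈ G.neighborFinset u ∩ G.neighborFinset v, 1 / Real.log (G.degree x) := by
  set a : ℝ := 1 / Real.sqrt d with ha_def
  have hdpos : (0:ℝ) < d := by exact_mod_cast hd
  have hsqrt : (0:ℝ) < Real.sqrt d := Real.sqrt_pos.mpr hdpos
  have ha : 0 < a := by positivity
  have haa : a * a = 1 / d := by
    rw [ha_def, div_mul_div_comm, one_mul, Real.mul_self_sqrt hdpos.le]
  -- a.e. the coordinates are ±a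
  have hae : ∀ (s : V) (i : Fin d), ∀ᵐ ω ∂μ, ψ ω s i = a ∨ ψ ω s i = -a := by
    intro s i
    set A : Set Ω := {ω | ψ ω s i = a}
    set B : Set Ω := {ω | ψ ω s i = -a}
    have mA : MeasurableSet A := (hmeas s i) (measurableSet_singleton a)
    have mB : MeasurableSet B := (hmeas s i) (measurableSet_singleton (-a))
    have hdisj : Disjoint A B := by
      rw [Set.disjoint_left]
      intro ω hA hB
      have : a = -a := hA.symm.trans hB
      nlinarith
    have hAB : μ (A ∪ B) = 1 := by
      rw [measure_union hdisj mB, (hunif s i).1, (hunif s i).2]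
      rw [ENNReal.div_add_div_same, one_add_one_eq_two,
        ENNReal.div_self two_ne_zero ENNReal.ofNat_ne_top]
    have hcompl : μ (A ∪ B)ᶜ = 0 := by
      rw [measure_compl (mA.union mB) (measure_ne_top μ _), hAB]
      simp
    have : {ω | ¬(ψ ω s i = a ∨ ψ ω s i = -a)} ⊆ (A ∪ B)ᶜ := by
      intro ω hω
      simp only [Set.mem_setOf_eq, not_or] at hω
      simp only [Set.mem_compl_iff, Set.mem_union, A, B, Set.mem_setOf_eq]
      tauto
    exact measure_mono_null this hcompl
  -- integrability
  have hint : ∀ (s : V) (i : Fin d), Integrable (fun ω => ψ ω s i) μ := by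
    intro s i
    refine (integrable_const a).mono' (hmeas s i).aestronglyMeasurable ?_
    filter_upwards [hae s i] with ω h
    rcases h with h | h <;> rw [Real.norm_eq_abs, h] <;>
      simp [abs_of_nonneg ha.le]
  have hprod : ∀ (s : V) (i : Fin d) (t : V) (j : Fin d),
      Integrable (fun ω => ψ ω s i * ψ ω t j) μ := by
    intro s i t j
    refine (integrable_const (a * a)).mono'
      (((hmeas s i).mul (hmeas t j)).aestronglyMeasurable) ?_
    filter_upwards [hae s i, hae t j] with ω h1 h2
    rcases h1 with h1 | h1 <;> rcases h2 with h2 | h2 <;>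
      rw [Real.norm_eq_abs, h1, h2] <;>
      simp [abs_mul, abs_of_nonneg ha.le, le_refl]
  -- mean zero
  have hmean : ∀ (s : V) (i : Fin d), ∫ ω, ψ ω s i ∂μ = 0 := by
    intro s i
    set A : Set Ω := {ω | ψ ω s i = a}
    set B : Set Ω := {ω | ψ ω s i = -a}
    have mA : MeasurableSet A := (hmeas s i) (measurableSet_singleton a)
    have mB : MeasurableSet B := (hmeas s i) (measurableSet_singleton (-a))
    have hcongr : (fun ω => ψ ω s i) =ᵐ[μ]
        fun ω => A.indicator (fun _ => a) ω + B.indicator (fun _ => -a) ω := by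
      filter_upwards [hae s i] with ω h
      rcases h with h | h
      · have hωA : ω ∈ A := h
        have hωB : ω ∉ B := by
          simp only [B, Set.mem_setOf_eq, h]
          nlinarith
        rw [Set.indicator_of_mem hωA, Set.indicator_of_notMem hωB, h, add_zero]
      · have hωB : ω ∈ B := h
        have hωA : ω ∉ A := by
          simp only [A, Set.mem_setOf_eq, h]
          nlinarith
        rw [Set.indicator_of_notMem hωA, Set.indicator_of_mem hωB, h, zero_add]
    rw [integral_congr_ae hcongr, integral_add
      ((integrable_const a).indicator mA) ((integrable_const (-a)).indicator mB),
      integral_indicator_const _ mA, integral_indicator_const _ mB, measureReal_def, measureReal_def,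
      (hunif s i).1, (hunif s i).2]
    have : ((1:ℝ≥0∞)/2).toReal = (1:ℝ)/2 := by norm_num
    rw [this]
    simp only [smul_eq_mul]
    ring
  -- second moment
  have hsq : ∀ (s : V) (i : Fin d), ∫ ω, ψ ω s i * ψ ω s i ∂μ = 1 / d := by
    intro s i
    have hcongr : (fun ω => ψ ω s i * ψ ω s i) =ᵐ[μ] fun _ => a * a := by
      filter_upwards [hae s i] with ω h
      rcases h with h | h <;> rw [h] <;> ring
    rw [integral_congr_ae hcongr, integral_const, probReal_univ]
    simp [haa]
  -- cross moments vanish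
  have hcross : ∀ (s : V) (i : Fin d) (t : V) (j : Fin d), (s, i) ≠ (t, j) →
      ∫ ω, ψ ω s i * ψ ω t j ∂μ = 0 := by
    intro s i t j hne
    have hindep2 : IndepFun (fun ω => ψ ω s i) (fun ω => ψ ω t j) μ :=
      hindep.indepFun hne
    have h := ProbabilityTheory.IndepFun.integral_mul_eq_mul_integral hindep2
      (hint s i).aestronglyMeasurable (hint t j).aestronglyMeasurable
    simpa [Pi.mul_apply, hmean s i, hmean t j] using h
  -- abbreviations
  set Nu := G.neighborFinset u
  set Nv := G.neighborFinset v
  set c : V → ℝ := fun x => Real.sqrt (1 / Real.log (G.degree x)) with hc_def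
  have hc : ∀ x ∈ Nu ∪ Nv, c x * c x = 1 / Real.log (G.degree x) := by
    intro x hx
    have h2 : (2:ℝ) ≤ G.degree x := by exact_mod_cast hdeg x hx
    have hlog : 0 ≤ Real.log (G.degree x) := Real.log_nonneg (by linarith)
    exact Real.mul_self_sqrt (by positivity)
  -- the per-coordinate expectation
  have step : ∀ i : Fin d,
      ∫ ω, (∑ x ∈ Nu, ψ ω x i * c x) * (∑ y ∈ Nv, ψ ω y i * c y) ∂μ
      = ∑ x ∈ Nu, ∑ y ∈ Nv, c x * c y * (if x = y then (1:ℝ)/d else 0) := by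
    intro i
    have hexp : (fun ω => (∑ x ∈ Nu, ψ ω x i * c x) * (∑ y ∈ Nv, ψ ω y i * c y))
        = fun ω => ∑ x ∈ Nu, ∑ y ∈ Nv, c x * c y * (ψ ω x i * ψ ω y i) := by
      funext ω
      rw [Finset.sum_mul_sum]
      refine Finset.sum_congr rfl fun x _ => Finset.sum_congr rfl fun y _ => by ring
    rw [hexp, integral_finset_sum _ fun x _ =>
      integrable_finset_sum _ fun y _ => (hprod x i y i).const_mul _]
    refine Finset.sum_congr rfl fun x _ => ?_
    rw [integral_finset_sum _ fun y _ => (hprod x i y i).const_mul _]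
    refine Finset.sum_congr rfl fun y _ => ?_
    rw [integral_const_mul]
    by_cases hxy : x = y
    · subst hxy
      rw [hsq x i, if_pos rfl]
    · rw [hcross x i y i (by simp [hxy]), if_neg hxy, mul_zero]
  -- assemble
  have hintegrand : ∀ i : Fin d, Integrable
      (fun ω => (∑ x ∈ Nu, ψ ω x i * c x) * (∑ y ∈ Nv, ψ ω y i * c y)) μ := by
    intro i
    have hexp : (fun ω => (∑ x ∈ Nu, ψ ω x i * c x) * (∑ y ∈ Nv, ψ ω y i * c y))
        = fun ω => ∑ x ∈ Nu, ∑ y ∈ Nv, c x * c y * (ψ ω x i * ψ ω y i) := by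
      funext ω
      rw [Finset.sum_mul_sum]
      refine Finset.sum_congr rfl fun x _ => Finset.sum_congr rfl fun y _ => by ring
    rw [hexp]
    exact integrable_finset_sum _ fun x _ =>
      integrable_finset_sum _ fun y _ => (hprod x i y i).const_mul _
  rw [integral_finset_sum _ fun i _ => hintegrand i]
  have hsum : ∀ i : Fin d,
      ∫ ω, (∑ x ∈ Nu, ψ ω x i * c x) * (∑ y ∈ Nv, ψ ω y i * c y) ∂μ
      = ∑ x ∈ Nu ∩ Nv, c x * c x * (1 / d) := by
    intro i
    rw [step i, ← Finset.sum_ite_mem Nu Nv fun x => c x * c x * (1/d)]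
    refine Finset.sum_congr rfl fun x hx => ?_
    rw [← Finset.sum_ite_eq Nv x fun y => c x * c y * (1/d)]
    refine Finset.sum_congr rfl fun y _ => ?_
    by_cases hxy : x = y
    · subst hxy; simp
    · simp [hxy]
  simp_rw [hsum]
  rw [Finset.sum_const, Finset.card_univ, Fintype.card_fin, nsmul_eq_mul,
    Finset.mul_sum]
  refine Finset.sum_congr rfl fun x hx => ?_
  have hxu : x ∈ Nu ∪ Nv := Finset.mem_union_left _ (Finset.mem_inter.mp hx).1
  have h2 : (2:ℝ) ≤ G.degree x := by exact_mod_cast hdeg x hxu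
  have hlog : 0 < Real.log (G.degree x) := Real.log_pos (by linarith)
  rw [hc x hxu]
  field_simp
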